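/- arXiv:2401.06286 — 3 statements merged into one kernel-verified Lean document; each statement's English description precedes it below -/
import Mathlib

section
/- In the field of rational functions ℂ(x12, x13, x14, x23, x24, x34), the 6×6 matrix J_B whose columns correspond to the partial derivatives of the face-volume functions indexed by B = {12, 13, 14, 123, 124, 134} (as given by the Jacobian of the parametrization of X₃) has determinant (−1/8³)·(x13 + x14 − x34)·(x12 + x14 − x24)·(x12 + x13 − x23), which is a nonzero rational function; hence B is a basis of the algebraic matroid of X₃. -/
set_option maxRecDepth 10000
set_option maxHeartbeats 2000000

/-- The 6×6 submatrix of the (transposed) Jacobian of the parametrization of the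
Heron variety `X₃` indexed by `B = {12, 13, 14, 123, 124, 134}` has determinant
`(−1/8³)·(x13 + x14 − x34)·(x12 + x14 − x24)·(x12 + x13 − x23)`, a nonzero rational
function; hence `B` is a basis of the algebraic matroid of `X₃`. -/
theorem jacobian_minor_icecream :
    (∀ x12 x13 x14 x23 x24 x34 : ℂ,
      Matrix.det !![(1 : ℂ), 0, 0, (1/8) * (-x12 + x13 + x23), (1/8) * (-x12 + x14 + x24), 0;
        0, 1, 0, (1/8) * (x12 - x13 + x23), 0, (1/8) * (-x13 + x14 + x34);
        0, 0, 0, (1/8) * (x12 + x13 - x23), 0, 0;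
        0, 0, 1, 0, (1/8) * (x12 - x14 + x24), (1/8) * (x13 - x14 + x34);
        0, 0, 0, 0, (1/8) * (x12 + x14 - x24), 0;
        0, 0, 0, 0, 0, (1/8) * (x13 + x14 - x34)] =
      (-1 / 8 ^ 3) * (x13 + x14 - x34) * (x12 + x14 - x24) * (x12 + x13 - x23)) ∧
    (∃ x12 x13 x14 x23 x24 x34 : ℂ,
      (-1 / 8 ^ 3 : ℂ) * (x13 + x14 - x34) * (x12 + x14 - x24) * (x12 + x13 - x23) ≠ 0) := by
  constructor
  · intro x12 x13 x14 x23 x24 x34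
    simp [Matrix.det_succ_row_zero, Fin.sum_univ_succ, Fin.succAbove]
    ring
  · exact ⟨0, 1, 1, 0, 0, 0, by norm_num⟩
end

section
/- The subset D = {12, 13, 24, 34, 123, 234} is a dependent set of the algebraic matroid of X₃: the coordinate projection of X₃ onto these six coordinates is not dominant. Concretely, the Jacobian of the parametrization ϕ₃ of X₃ restricted to these six coordinate functions has rank at most 5 at every point. -/
/-- The 6×6 minor of the Jacobian of the parametrization of `X₃` with columns
indexed by `{12, 13, 24, 34, 123, 234}` is identically zero; hence
`D = {12, 13, 24, 34, 123, 234}` is a dependent set of the algebraic matroid of `X₃`.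
Rows are indexed by the edges `(12, 13, 14, 23, 24, 34)`. -/
theorem jacobian_minor_dependent :
    ∀ x12 x13 x14 x23 x24 x34 : ℂ,
      Matrix.det !![(1 : ℂ), 0, 0, 0, (1/8) * (-x12 + x13 + x23), 0;
        0, 1, 0, 0, (1/8) * (x12 - x13 + x23), 0;
        0, 0, 0, 0, 0, 0;
        0, 0, 0, 0, (1/8) * (x12 + x13 - x23), (1/8) * (-x23 + x24 + x34);
        0, 0, 1, 0, 0, (1/8) * (x23 - x24 + x34);
        0, 0, 0, 1, 0, (1/8) * (x23 + x24 - x34)] = 0 := by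
  intro x12 x13 x14 x23 x24 x34
  apply Matrix.det_eq_zero_of_row_eq_zero 2
  intro j
  fin_cases j <;> norm_num [Matrix.vecHead, Matrix.vecTail, Matrix.cons_val_fin_one, Matrix.cons_val_succ, Matrix.cons_val_two]
end

section
/- Let F : ℂⁿ → ℂⁿ be a polynomial map, let X ⊆ ℂⁿ × ℂᴺ be the graph of a polynomial parametrization ϕ : ℂⁿ → ℂᴺ (identifying X with its image in ℂ^{n+N} in graph coordinates), and let B be a subset of coordinates of size n. If there exists a single point q ∈ ℚⁿ at which the n×n submatrix of the Jacobian of ϕ indexed by B is invertible, then B is a basis of the algebraic matroid of the Zariski closure of the image of ϕ. -/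
open MvPolynomial

namespace MCAux

lemma coeff_pderiv {σ R : Type*} [CommSemiring R] [DecidableEq σ] (j : σ) (t : σ →₀ ℕ)
    (p : MvPolynomial σ R) :
    coeff t (pderiv j p) = ((t j : R) + 1) * coeff (t + Finsupp.single j 1) p := by
  induction p using MvPolynomial.induction_on' with
  | add p q hp hq => simp [hp, hq, mul_add]
  | monomial s a =>
    rw [pderiv_monomial]
    by_cases hs : s = t + Finsupp.single j 1
    · subst hs
      rw [add_tsub_cancel_right, coeff_monomial, coeff_monomial, if_pos rfl, if_pos rfl,
        Finsupp.add_apply, Finsupp.single_apply, if_pos rfl]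
      push_cast
      ring
    · rw [coeff_monomial, coeff_monomial, if_neg hs, mul_zero]
      by_cases hj : s j = 0
      · simp [hj]
      · rw [if_neg]
        intro hst
        apply hs
        have hle : Finsupp.single j 1 ≤ s := by
          rw [Finsupp.single_le_iff]
          omega
        rw [← hst, tsub_add_cancel_of_le hle]

lemma pderiv_ne_zero_of_mem_vars {σ : Type*} [DecidableEq σ] {K : Type*} [Field K] [CharZero K]
    {p : MvPolynomial σ K} {j : σ} (h : j ∈ p.vars) : pderiv j p ≠ 0 := by
  obtain ⟨d, hd, hj⟩ := (mem_vars j).1 h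
  have hdj : d j ≠ 0 := Finsupp.mem_support_iff.1 hj
  have hle : Finsupp.single j 1 ≤ d := by
    rw [Finsupp.single_le_iff]; omega
  intro h0
  set t : σ →₀ ℕ := d - Finsupp.single j 1 with ht
  have hc := coeff_pderiv j t p
  rw [h0, coeff_zero, ht, tsub_add_cancel_of_le hle] at hc
  have h1 : ((t j : K) + 1) ≠ 0 := by
    have : ((t j + 1 : ℕ) : K) ≠ 0 := Nat.cast_ne_zero.2 (by omega)
    push_cast at this
    simpa using this
  exact (mem_support_iff.1 hd) (by
    rcases mul_eq_zero.1 hc.symm with h' | h'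
    · exact absurd h' h1
    · exact h')

lemma totalDegree_pderiv_lt {σ : Type*} [DecidableEq σ] {K : Type*} [Field K]
    {p : MvPolynomial σ K} (h : p.totalDegree ≠ 0) (j : σ) :
    (pderiv j p).totalDegree < p.totalDegree := by
  rw [totalDegree]
  rw [Finset.sup_lt_iff (by simpa using Nat.pos_of_ne_zero h)]
  intro t ht
  have hc : coeff t (pderiv j p) ≠ 0 := mem_support_iff.1 ht
  rw [coeff_pderiv] at hc
  have hct : coeff (t + Finsupp.single j 1) p ≠ 0 := by
    intro h'; exact hc (by rw [h', mul_zero])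
  have hle : ((t + Finsupp.single j 1).sum fun _ e => e) ≤ p.totalDegree :=
    le_totalDegree (mem_support_iff.2 hct)
  have hsum : ((t + Finsupp.single j 1).sum fun _ e => e)
      = (t.sum fun _ e => e) + 1 := by
    rw [Finsupp.sum_add_index' (fun _ => rfl) (fun _ _ _ => rfl)]
    simp [Finsupp.sum_single_index]
  omega


lemma pderiv_aeval {K : Type*} [CommRing K] {n : ℕ}
    (g : Fin n → MvPolynomial (Fin n) K) (p : MvPolynomial (Fin n) K) (i : Fin n) :
    pderiv i (aeval g p) = ∑ j, aeval g (pderiv j p) * pderiv i (g j) := by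
  induction p using MvPolynomial.induction_on with
  | C a => simp [aeval_C]
  | add p q hp hq =>
    rw [map_add, map_add, hp, hq, ← Finset.sum_add_distrib]
    refine Finset.sum_congr rfl fun k _ => ?_
    rw [map_add, map_add, add_mul]
  | mul_X p j hp =>
    rw [map_mul, aeval_X, pderiv_mul, hp]
    have key : ∀ k : Fin n, aeval g (pderiv k (p * X j)) * pderiv i (g k)
        = aeval g (pderiv k p) * pderiv i (g k) * g j
          + (if j = k then aeval g p * pderiv i (g k) else 0) := by
      intro k
      rw [pderiv_mul, map_add, map_mul, aeval_X, add_mul]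
      congr 1
      · ring
      · rw [pderiv_X]
        by_cases h : j = k
        · subst h; simp
        · simp [Pi.single_apply, h, (Ne.symm h : ¬ k = j)]
    rw [Finset.sum_congr rfl (fun k _ => key k), Finset.sum_add_distrib,
      Finset.sum_ite_eq (Finset.univ : Finset (Fin n)) j
        (fun k => aeval g p * pderiv i (g k)), if_pos (Finset.mem_univ j),
      ← Finset.sum_mul]

lemma eq_C_of_totalDegree_eq_zero {σ K : Type*} [CommSemiring K]
    {p : MvPolynomial σ K} (h : p.totalDegree = 0) : p = C (coeff 0 p) := by
  classical
  ext m
  rw [coeff_C]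
  by_cases hm : 0 = m
  · rw [if_pos hm, ← hm]
  · rw [if_neg hm]
    by_contra hc
    have h2 := ((totalDegree_eq_zero_iff σ p).1 h) m (mem_support_iff.2 hc)
    have : m = 0 := Finsupp.ext fun x => by simp [h2 x]
    exact hm this.symm

lemma aeval_eq_zero_imp_zero {n : ℕ} (ψ : Fin n → MvPolynomial (Fin n) ℂ)
    (qc : Fin n → ℂ)
    (hdet : Matrix.det (Matrix.of fun i j : Fin n =>
      MvPolynomial.eval qc (MvPolynomial.pderiv i (ψ j))) ≠ 0) :
    ∀ p : MvPolynomial (Fin n) ℂ, aeval ψ p = 0 → p = 0 := by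
  set A : Matrix (Fin n) (Fin n) (MvPolynomial (Fin n) ℂ) :=
    Matrix.of fun i j => pderiv i (ψ j) with hA
  have hAdet : A.det ≠ 0 := by
    intro h0
    apply hdet
    have h1 : (Matrix.of fun i j : Fin n => MvPolynomial.eval qc (MvPolynomial.pderiv i (ψ j)))
        = (eval qc : MvPolynomial (Fin n) ℂ →+* ℂ).mapMatrix A := rfl
    rw [h1, ← RingHom.map_det, h0, map_zero]
  have hconst : ∀ p : MvPolynomial (Fin n) ℂ, p.totalDegree = 0 → aeval ψ p = 0 → p = 0 := by
    intro p hdeg h0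
    rw [eq_C_of_totalDegree_eq_zero hdeg] at h0 ⊢
    rw [aeval_C] at h0
    have : coeff 0 p = 0 := by
      have := congrArg (eval (fun _ => (0 : ℂ))) h0
      simpa using this
    rw [this, map_zero]
  suffices H : ∀ d : ℕ, ∀ p : MvPolynomial (Fin n) ℂ, p.totalDegree ≤ d →
      aeval ψ p = 0 → p = 0 by
    intro p h0; exact H p.totalDegree p le_rfl h0
  intro d
  induction d with
  | zero => intro p hdeg h0; exact hconst p (Nat.le_zero.1 hdeg) h0
  | succ d ih =>
    intro p hdeg h0
    set v : Fin n → MvPolynomial (Fin n) ℂ := fun k => aeval ψ (pderiv k p) with hv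
    have hmv : A.mulVec v = 0 := by
      funext i
      have h2 : A.mulVec v i = ∑ k, aeval ψ (pderiv k p) * pderiv i (ψ k) := by
        rw [Matrix.mulVec, dotProduct]
        exact Finset.sum_congr rfl fun k _ => mul_comm _ _
      have h3 := pderiv_aeval ψ p i
      rw [h0, map_zero] at h3
      rw [Pi.zero_apply, h2, ← h3]
    have hvz : ∀ k, v k = 0 := by
      intro k
      have h4 : A.det • v = 0 := by
        rw [← Matrix.one_mulVec v, ← Matrix.smul_mulVec, ← Matrix.adjugate_mul A,
          ← Matrix.mulVec_mulVec, hmv, Matrix.mulVec_zero]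
      have h5 : A.det * v k = 0 := congrFun h4 k
      rcases mul_eq_zero.1 h5 with h | h
      · exact absurd h hAdet
      · exact h
    have hpz : ∀ k, pderiv k p = 0 := by
      intro k
      by_cases hk : pderiv k p = 0
      · exact hk
      · have hd0 : p.totalDegree ≠ 0 := by
          intro h'
          rw [eq_C_of_totalDegree_eq_zero h'] at hk
          exact hk (pderiv_C)
        exact ih _ (by have := totalDegree_pderiv_lt hd0 k; omega) (hvz k)
    apply hconst p ?_ h0
    by_contra hd0
    obtain ⟨m, hm, x, hx⟩ : ∃ m ∈ p.support, ∃ x, m x ≠ 0 := by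
      by_contra hAll
      push_neg at hAll
      exact hd0 ((totalDegree_eq_zero_iff _ p).2 hAll)
    have : x ∈ p.vars := (mem_vars x).2 ⟨m, hm, Finsupp.mem_support_iff.2 hx⟩
    exact pderiv_ne_zero_of_mem_vars this (hpz x)

section Count
variable {σ : Type*} [Fintype σ] [DecidableEq σ]



lemma totalDegree_aeval_le {σ τ K : Type*} [CommSemiring K]
    (g : σ → MvPolynomial τ K) (D : ℕ) (hD : ∀ i, (g i).totalDegree ≤ D)
    (p : MvPolynomial σ K) : (aeval g p).totalDegree ≤ D * p.totalDegree := by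
  classical
  rw [aeval_def, eval₂_eq]
  refine (totalDegree_finset_sum _ _).trans (Finset.sup_le fun s hs => ?_)
  refine (totalDegree_mul _ _).trans ?_
  have h1 : (C (σ := τ) (coeff s p) : MvPolynomial τ K).totalDegree = 0 := totalDegree_C _
  rw [show algebraMap K (MvPolynomial τ K) (coeff s p) = C (coeff s p) from rfl, h1, zero_add]
  refine (totalDegree_finset_prod _ _).trans ?_
  have h2 : ∑ i ∈ s.support, ((g i ^ s i).totalDegree) ≤ ∑ i ∈ s.support, D * s i := by
    refine Finset.sum_le_sum fun i _ => ?_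
    refine (totalDegree_pow _ _).trans ?_
    calc s i * (g i).totalDegree ≤ s i * D := Nat.mul_le_mul_left _ (hD i)
      _ = D * s i := Nat.mul_comm _ _
  refine h2.trans ?_
  rw [← Finset.mul_sum]
  refine Nat.mul_le_mul_left _ ?_
  exact le_totalDegree hs

variable {σ : Type*} [Fintype σ] [DecidableEq σ]

lemma le_sum_self (s : σ →₀ ℕ) (i : σ) : s i ≤ s.sum fun _ e => e := by
  by_cases h : i ∈ s.support
  · exact Finset.single_le_sum (f := fun a => s a) (fun _ _ => Nat.zero_le _) h
  · simp [Finsupp.notMem_support_iff.mp h]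

noncomputable instance degFinite (m : ℕ) :
    Finite {s : σ →₀ ℕ | (s.sum fun _ e => e) ≤ m} := by
  apply Finite.of_injective (f := fun (s : {s : σ →₀ ℕ | (s.sum fun _ e => e) ≤ m}) =>
    (fun i => (⟨s.1 i, Nat.lt_succ_of_le ((le_sum_self s.1 i).trans s.2)⟩ : Fin (m+1))))
  intro s t h
  ext i
  exact congrArg Fin.val (congrFun h i)

lemma card_deg_le (m : ℕ) :
    Nat.card {s : σ →₀ ℕ | (s.sum fun _ e => e) ≤ m} ≤ (m + 1) ^ Fintype.card σ := by
  have h := Nat.card_le_card_of_injective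
    (f := fun (s : {s : σ →₀ ℕ | (s.sum fun _ e => e) ≤ m}) =>
      (fun i => (⟨s.1 i, Nat.lt_succ_of_le ((le_sum_self s.1 i).trans s.2)⟩ : Fin (m+1))))
    (by intro s t h; ext i; exact congrArg Fin.val (congrFun h i))
  refine h.trans ?_
  rw [Nat.card_eq_fintype_card]
  simp [Fintype.card_fun]

lemma card_deg_ge (k : ℕ) :
    (k + 1) ^ Fintype.card σ ≤
      Nat.card {s : σ →₀ ℕ | (s.sum fun _ e => e) ≤ Fintype.card σ * k} := by
  have h := Nat.card_le_card_of_injective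
    (f := fun (f : σ → Fin (k+1)) =>
      (⟨Finsupp.equivFunOnFinite.symm (fun i => (f i : ℕ)), by
        simp only [Set.mem_setOf_eq]
        rw [Finsupp.sum_fintype _ _ (fun _ => rfl)]
        calc ∑ i, ((Finsupp.equivFunOnFinite.symm fun i => ((f i : ℕ))) i)
            = ∑ i : σ, ((f i : ℕ)) := by
              refine Finset.sum_congr rfl fun i _ => ?_
              simp [Finsupp.equivFunOnFinite]
              rfl
          _ ≤ ∑ _i : σ, k := Finset.sum_le_sum fun i _ => Fin.is_le _
          _ = Fintype.card σ * k := by simp [Finset.sum_const, Finset.card_univ, mul_comm]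
        ⟩ : {s : σ →₀ ℕ | (s.sum fun _ e => e) ≤ Fintype.card σ * k}))
    (by
      intro f g hfg
      funext i
      have := congrArg (fun s => (s.1 : (σ →₀ ℕ)) i) hfg
      simp only [Finsupp.equivFunOnFinite] at this
      exact Fin.ext this)
  refine le_trans ?_ h
  rw [Nat.card_eq_fintype_card]
  simp [Fintype.card_fun]

lemma finrank_restrictTotalDegree (K : Type*) [Field K] (m : ℕ) :
    Module.finrank K (restrictTotalDegree σ K m)
      = Nat.card {s : σ →₀ ℕ | (s.sum fun _ e => e) ≤ m} := by
  haveI := Fintype.ofFinite {s : σ →₀ ℕ | (s.sum fun _ e => e) ≤ m}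
  rw [restrictTotalDegree, Module.finrank_eq_card_basis (basisRestrictSupport K _),
    Nat.card_eq_fintype_card]


end Count
lemma arith (n D : ℕ) (hD : 1 ≤ D) :
    (D * ((n+1) * ((n+1)*(D+1))^n) + 1) ^ n < (((n+1)*(D+1))^n + 1) ^ (n+1) := by
  set k := ((n+1)*(D+1))^n with hk
  have hkpos : 1 ≤ k := Nat.one_le_pow _ _ (by positivity)
  have h1 : D * ((n+1) * k) + 1 ≤ (n+1)*(D+1)*(k+1) := by nlinarith
  calc (D * ((n+1) * k) + 1) ^ n ≤ ((n+1)*(D+1)*(k+1)) ^ n :=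
        Nat.pow_le_pow_left h1 n
    _ = k * (k+1)^n := by rw [mul_pow, ← hk]
    _ < (k+1) * (k+1)^n := by
        have hp : (0:ℕ) < (k+1)^n := by positivity
        exact Nat.mul_lt_mul_of_lt_of_le (Nat.lt_succ_self k) le_rfl hp
    _ = (k+1)^(n+1) := by ring


lemma exists_annihilator {n : ℕ} (g : Option (Fin n) → MvPolynomial (Fin n) ℂ) :
    ∃ p : MvPolynomial (Option (Fin n)) ℂ, p ≠ 0 ∧ aeval g p = 0 := by
  by_contra hcon
  push_neg at hcon
  have hinj : Function.Injective (aeval g : MvPolynomial (Option (Fin n)) ℂ →ₐ[ℂ]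
      MvPolynomial (Fin n) ℂ) := by
    intro a b hab
    by_contra hne
    refine hcon (a - b) (sub_ne_zero.2 hne) ?_
    rw [map_sub, hab, sub_self]
  set D : ℕ := 1 + Finset.univ.sup (fun o : Option (Fin n) => (g o).totalDegree) with hDdef
  have hD1 : 1 ≤ D := Nat.le_add_right 1 _
  have hD : ∀ o, (g o).totalDegree ≤ D := by
    intro o
    rw [hDdef]
    exact le_trans (Finset.le_sup (f := fun o : Option (Fin n) => (g o).totalDegree)
      (Finset.mem_univ o)) (Nat.le_add_left _ 1)
  set k : ℕ := ((n+1)*(D+1))^n with hkdef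
  set d : ℕ := (n+1) * k with hddef
  -- the restricted linear map
  have hmaps : ∀ x ∈ restrictTotalDegree (Option (Fin n)) ℂ d,
      (aeval g).toLinearMap x ∈ restrictTotalDegree (Fin n) ℂ (D * d) := by
    intro x hx
    rw [mem_restrictTotalDegree] at hx ⊢
    exact le_trans (totalDegree_aeval_le g D hD x)
      (Nat.mul_le_mul_left _ hx)
  set L := ((aeval g).toLinearMap).restrict hmaps with hL
  have hLinj : Function.Injective L := by
    intro x y hxy
    apply Subtype.ext
    apply hinj
    have := congrArg Subtype.val hxy
    simpa [hL, LinearMap.restrict_apply] using this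
  have hfr := LinearMap.finrank_le_finrank_of_injective hLinj
  rw [finrank_restrictTotalDegree, finrank_restrictTotalDegree] at hfr
  have hlow : (k + 1) ^ (n+1) ≤
      Nat.card {s : Option (Fin n) →₀ ℕ | (s.sum fun _ e => e) ≤ d} := by
    have := card_deg_ge (σ := Option (Fin n)) k
    rwa [Fintype.card_option, Fintype.card_fin] at this
  have hup : Nat.card {s : Fin n →₀ ℕ | (s.sum fun _ e => e) ≤ D * d}
      ≤ (D * d + 1) ^ n := by
    have := card_deg_le (σ := Fin n) (D * d)
    rwa [Fintype.card_fin] at this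
  have harith := arith n D hD1
  rw [← hkdef, ← hddef] at harith
  omega


lemma eval_aeval {κ τ : Type*} (g : κ → MvPolynomial τ ℂ) (x : τ → ℂ)
    (p : MvPolynomial κ ℂ) :
    eval (fun k => eval x (g k)) p = eval x (aeval g p) := by
  calc eval (fun k => eval x (g k)) p
      = eval₂Hom (RingHom.id ℂ) (fun i => eval₂Hom (RingHom.id ℂ) x (g i)) p := rfl
    _ = eval₂Hom (RingHom.id ℂ) x (bind₁ g p) := (eval₂Hom_bind₁ _ _ _ _).symm
    _ = eval x (aeval g p) := rfl

end MCAux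

/-- Correctness of the one-sided Monte Carlo basis test: if the `B`-indexed `n×n`
submatrix of the Jacobian of a polynomial parametrization `ϕ : ℂⁿ → ℂᴺ` is
invertible at a single rational point `q`, then `B` (given by an injective listing
`b : Fin n → Fin N` of coordinates) is a basis of the algebraic matroid of the
closure of the image of `ϕ`: the coordinates indexed by `B` are algebraically
independent on the image, and adjoining any further coordinate yields a dependent set. -/
theorem monte_carlo_basis_test {n N : ℕ}
    (ϕ : Fin N → MvPolynomial (Fin n) ℂ)
    (b : Fin n → Fin N) (hb : Function.Injective b)
    (q : Fin n → ℚ)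
    (hjac : IsUnit (Matrix.det (Matrix.of fun i j : Fin n =>
      MvPolynomial.eval (fun k => ((q k : ℂ))) (MvPolynomial.pderiv i (ϕ (b j)))))) :
    (∀ p : MvPolynomial (Fin n) ℂ,
      (∀ x : Fin n → ℂ,
        MvPolynomial.eval (fun k => MvPolynomial.eval x (ϕ (b k))) p = 0) → p = 0) ∧
    (∀ j : Fin N, j ∉ Set.range b →
      ∃ p : MvPolynomial (Option (Fin n)) ℂ, p ≠ 0 ∧
        ∀ x : Fin n → ℂ,
          MvPolynomial.eval
            (fun o => Option.elim o (MvPolynomial.eval x (ϕ j))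
              (fun k => MvPolynomial.eval x (ϕ (b k)))) p = 0) := by
  constructor
  · intro p hp
    apply MCAux.aeval_eq_zero_imp_zero (fun k => ϕ (b k)) (fun k => (q k : ℂ)) hjac.ne_zero p
    apply MvPolynomial.funext
    intro x
    rw [map_zero, ← MCAux.eval_aeval]
    exact hp x
  · intro j _
    obtain ⟨p, hp0, hpz⟩ :=
      MCAux.exists_annihilator (fun o => Option.elim o (ϕ j) fun k => ϕ (b k))
    refine ⟨p, hp0, fun x => ?_⟩
    have h := MCAux.eval_aeval (fun o => Option.elim o (ϕ j) fun k => ϕ (b k)) x p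
    rw [hpz, map_zero] at h
    have h2 : (fun o => Option.elim o (MvPolynomial.eval x (ϕ j))
        (fun k => MvPolynomial.eval x (ϕ (b k))))
        = fun o => eval x (Option.elim o (ϕ j) fun k => ϕ (b k)) := by
      funext o; cases o <;> rfl
    rw [h2]
    exact h
end
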